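/- For every integer n ≥ 1 there exists a finite set V ⊆ ℤ² with #V = n such that the number of nearest-neighbor pairs of V equals exactly 2n − ⌈2√n⌉, i.e. #{{x,y} ⊆ V : |x−y| = 1} = 2n − ⌈2√n⌉. -/

import Mathlib

/-- The set of nearest-neighbor pairs of `V ⊆ ℤ²`: unordered pairs of distinct points of `V`
at Euclidean distance `1`. -/
def nnPairs (V : Finset (ℤ × ℤ)) : Set (Sym2 (ℤ × ℤ)) :=
  {e | ∃ x ∈ V, ∃ y ∈ V, x ≠ y ∧
    Real.sqrt (((x.1 : ℝ) - (y.1 : ℝ)) ^ 2 + ((x.2 : ℝ) - (y.2 : ℝ)) ^ 2) = 1 ∧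
    e = s(x, y)}

lemma dist_iff (x y : ℤ × ℤ) :
    Real.sqrt (((x.1 : ℝ) - (y.1 : ℝ)) ^ 2 + ((x.2 : ℝ) - (y.2 : ℝ)) ^ 2) = 1 ↔
      (x.1 - y.1)^2 + (x.2 - y.2)^2 = 1 := by
  rw [Real.sqrt_eq_one]
  constructor
  · intro h; exact_mod_cast h
  · intro h; exact_mod_cast congrArg (fun t : ℤ => (t : ℝ)) h

lemma sq_sum_one (u v : ℤ) (h : u^2 + v^2 = 1) :
    (u = 1 ∧ v = 0) ∨ (u = -1 ∧ v = 0) ∨ (u = 0 ∧ v = 1) ∨ (u = 0 ∧ v = -1) := by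
  have h1 : u^2 ≤ 1 := by nlinarith [sq_nonneg v]
  have h2 : v^2 ≤ 1 := by nlinarith [sq_nonneg u]
  obtain ⟨h3,h4⟩ := abs_le_of_sq_le_sq' (a := u) (b := (1:ℤ)) (by rw [one_pow]; exact h1) one_pos.le
  obtain ⟨h5,h6⟩ := abs_le_of_sq_le_sq' (a := v) (b := (1:ℤ)) (by rw [one_pow]; exact h2) one_pos.le
  interval_cases u <;> interval_cases v <;> simp_all

def rtF (V : Finset (ℤ × ℤ)) : Finset (ℤ × ℤ) := V.filter (fun x => (x.1+1, x.2) ∈ V)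
def upF (V : Finset (ℤ × ℤ)) : Finset (ℤ × ℤ) := V.filter (fun x => (x.1, x.2+1) ∈ V)
def edgeF (V : Finset (ℤ × ℤ)) : Finset (Sym2 (ℤ × ℤ)) :=
  (rtF V).image (fun x => s(x, (x.1+1, x.2))) ∪ (upF V).image (fun x => s(x, (x.1, x.2+1)))

lemma nn_eq (V : Finset (ℤ × ℤ)) : nnPairs V = ↑(edgeF V) := by
  ext e
  simp only [nnPairs, Set.mem_setOf_eq, Finset.mem_coe, edgeF, Finset.mem_union,
    Finset.mem_image, rtF, upF, Finset.mem_filter]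
  constructor
  · rintro ⟨⟨x1,x2⟩, hx, ⟨y1,y2⟩, hy, hne, hd, rfl⟩
    rw [dist_iff] at hd
    rcases sq_sum_one _ _ hd with ⟨h1,h2⟩|⟨h1,h2⟩|⟨h1,h2⟩|⟨h1,h2⟩
    · obtain rfl : x1 = y1 + 1 := by omega
      obtain rfl : x2 = y2 := by omega
      exact Or.inl ⟨(y1, x2), ⟨hy, hx⟩, Sym2.eq_swap⟩
    · obtain rfl : y1 = x1 + 1 := by omega
      obtain rfl : y2 = x2 := by omega
      exact Or.inl ⟨(x1, y2), ⟨hx, hy⟩, rfl⟩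
    · obtain rfl : x2 = y2 + 1 := by omega
      obtain rfl : x1 = y1 := by omega
      exact Or.inr ⟨(x1, y2), ⟨hy, hx⟩, Sym2.eq_swap⟩
    · obtain rfl : y2 = x2 + 1 := by omega
      obtain rfl : y1 = x1 := by omega
      exact Or.inr ⟨(y1, x2), ⟨hx, hy⟩, rfl⟩
  · rintro (⟨⟨x1,x2⟩, ⟨hx, hx'⟩, rfl⟩ | ⟨⟨x1,x2⟩, ⟨hx, hx'⟩, rfl⟩)
    · refine ⟨(x1,x2), hx, (x1+1,x2), hx', ?_, ?_, rfl⟩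
      · simp
      · rw [dist_iff]; ring
    · refine ⟨(x1,x2), hx, (x1,x2+1), hx', ?_, ?_, rfl⟩
      · simp
      · rw [dist_iff]; ring

lemma ncard_nn (V : Finset (ℤ × ℤ)) :
    (nnPairs V).ncard = (rtF V).card + (upF V).card := by
  rw [nn_eq, Set.ncard_coe_finset, edgeF, Finset.card_union_of_disjoint,
    Finset.card_image_of_injective, Finset.card_image_of_injective]
  · intro x y h
    rw [Sym2.eq_iff] at h
    rcases h with ⟨h1, h2⟩ | ⟨h1, h2⟩
    · exact h1
    · have e1 := congrArg Prod.fst h1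
      have e2 := congrArg Prod.fst h2
      have e3 := congrArg Prod.snd h1
      have e4 := congrArg Prod.snd h2
      simp at e1 e2 e3 e4
      exfalso; omega
  · intro x y h
    rw [Sym2.eq_iff] at h
    rcases h with ⟨h1, h2⟩ | ⟨h1, h2⟩
    · exact h1
    · have e1 := congrArg Prod.fst h1
      have e2 := congrArg Prod.fst h2
      have e3 := congrArg Prod.snd h1
      have e4 := congrArg Prod.snd h2
      simp at e1 e2 e3 e4
      exfalso; omega
  · rw [Finset.disjoint_left]
    rintro e he he'
    rw [Finset.mem_image] at he he'
    obtain ⟨x, hx, rfl⟩ := he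
    obtain ⟨y, hy, he⟩ := he'
    rw [Sym2.eq_iff] at he
    rcases he with ⟨h1, h2⟩ | ⟨h1, h2⟩ <;>
    · have e1 := congrArg Prod.fst h1
      have e2 := congrArg Prod.fst h2
      have e3 := congrArg Prod.snd h1
      have e4 := congrArg Prod.snd h2
      simp at e1 e2 e3 e4
      omega

lemma card_shape (m k l t : ℤ) (ht : k ≤ t) :
    ((Finset.Ico (0:ℤ) m ×ˢ Finset.Ico (0:ℤ) k) ∪
      (Finset.Ico (0:ℤ) l ×ˢ ({t} : Finset ℤ))).card = m.toNat * k.toNat + l.toNat := by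
  rw [Finset.card_union_of_disjoint]
  · simp [Int.card_Ico]
  · rw [Finset.disjoint_left]
    rintro ⟨x1, x2⟩ hx hy
    simp only [Finset.mem_product, Finset.mem_Ico, Finset.mem_singleton] at hx hy
    omega

lemma count_main (a b c : ℕ) (hca : c ≤ a) (hb : 1 ≤ b) (hc : 1 ≤ c) :
    ∃ V : Finset (ℤ × ℤ), V.card = a * b + c ∧
      ((nnPairs V).ncard : ℤ) = 2 * ((a : ℤ) * b + c) - ((a : ℤ) + b + 1) := by
  set V : Finset (ℤ × ℤ) :=
    (Finset.Ico (0:ℤ) a ×ˢ Finset.Ico (0:ℤ) b) ∪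
      (Finset.Ico (0:ℤ) c ×ˢ ({(b:ℤ)} : Finset ℤ)) with hV
  have memV : ∀ x : ℤ × ℤ, x ∈ V ↔
      (0 ≤ x.1 ∧ x.1 < a ∧ 0 ≤ x.2 ∧ x.2 < b) ∨ (0 ≤ x.1 ∧ x.1 < c ∧ x.2 = b) := by
    rintro ⟨x1, x2⟩
    simp only [hV, Finset.mem_union, Finset.mem_product, Finset.mem_Ico, Finset.mem_singleton]
    tauto
  have hrt : rtF V = (Finset.Ico (0:ℤ) ((a:ℤ)-1) ×ˢ Finset.Ico (0:ℤ) b) ∪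
      (Finset.Ico (0:ℤ) ((c:ℤ)-1) ×ˢ ({(b:ℤ)} : Finset ℤ)) := by
    ext ⟨x1, x2⟩
    simp only [rtF, Finset.mem_filter, memV, Finset.mem_union, Finset.mem_product,
      Finset.mem_Ico, Finset.mem_singleton]
    omega
  have hup : upF V = (Finset.Ico (0:ℤ) (a:ℤ) ×ˢ Finset.Ico (0:ℤ) ((b:ℤ)-1)) ∪
      (Finset.Ico (0:ℤ) (c:ℤ) ×ˢ ({(b:ℤ)-1} : Finset ℤ)) := by
    ext ⟨x1, x2⟩
    simp only [upF, Finset.mem_filter, memV, Finset.mem_union, Finset.mem_product,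
      Finset.mem_Ico, Finset.mem_singleton]
    omega
  refine ⟨V, ?_, ?_⟩
  · rw [hV, card_shape _ _ _ _ (le_refl (b:ℤ))]
    simp
  · rw [ncard_nn, hrt, hup, card_shape _ _ _ _ (le_refl (b:ℤ)),
      card_shape _ _ _ _ (le_refl ((b:ℤ)-1))]
    push_cast [Int.toNat_of_nonneg (by omega : (0:ℤ) ≤ (a:ℤ) - 1),
      Int.toNat_of_nonneg (by omega : (0:ℤ) ≤ (c:ℤ) - 1),
      Int.toNat_of_nonneg (by omega : (0:ℤ) ≤ (b:ℤ) - 1), Int.toNat_natCast]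
    ring

lemma ceil_eq (n m : ℕ) (h1 : ((m:ℤ) - 1)^2 < 4 * n) (h2 : (4 * n : ℤ) ≤ (m:ℤ)^2) :
    ⌈2 * Real.sqrt n⌉ = m := by
  have key : (2 : ℝ) * Real.sqrt n = Real.sqrt (4 * n) := by
    rw [show (4:ℝ) * n = 2^2 * n by ring, Real.sqrt_mul (by positivity),
      Real.sqrt_sq (by norm_num)]
  rw [Int.ceil_eq_iff, key]
  constructor
  · push_cast
    refine Real.lt_sqrt_of_sq_lt ?_
    have : (((m:ℤ) - 1)^2 : ℝ) < ((4 * n : ℤ) : ℝ) := by exact_mod_cast h1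
    push_cast at this
    linarith
  · have h3 : Real.sqrt (4 * n) ≤ Real.sqrt ((m:ℝ)^2) := by
      apply Real.sqrt_le_sqrt
      have : ((4 * n : ℤ) : ℝ) ≤ (((m:ℤ))^2 : ℝ) := by exact_mod_cast h2
      push_cast at this
      linarith
    rw [Real.sqrt_sq (by positivity)] at h3
    exact_mod_cast h3

/-- For every `n ≥ 1` there is an `n`-point subset of `ℤ²` with exactly `2n − ⌈2√n⌉`
nearest-neighbor pairs. -/
theorem exists_config_with_max_bonds (n : ℕ) (hn : 1 ≤ n) :
    ∃ V : Finset (ℤ × ℤ), V.card = n ∧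
      ((nnPairs V).ncard : ℤ) = 2 * (n : ℤ) - ⌈2 * Real.sqrt n⌉ := by
  rcases eq_or_lt_of_le hn with h1 | h2
  · -- n = 1
    refine ⟨{((0:ℤ), (0:ℤ))}, by simp [← h1], ?_⟩
    have he : nnPairs {((0:ℤ), (0:ℤ))} = ∅ := by
      ext e
      simp only [nnPairs, Set.mem_setOf_eq, Finset.mem_singleton, Set.mem_empty_iff_false,
        iff_false]
      rintro ⟨x, rfl, y, rfl, hne, -⟩
      exact hne rfl
    rw [he, ceil_eq n 2 (by omega) (by omega)]
    simp [← h1]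
  · -- n ≥ 2
    set k := Nat.sqrt (n - 1) with hk
    have hk1 : 1 ≤ k := by
      have := Nat.sqrt_le_sqrt (show 1 ≤ n - 1 by omega)
      simpa [hk] using this
    have hl : k * k < n := by
      have h := Nat.sqrt_le' (n - 1)
      rw [pow_two] at h
      exact lt_of_le_of_lt h (Nat.sub_lt (by omega) one_pos)
    have hh : n ≤ k * k + (k + k + 1) := by
      have h := Nat.lt_succ_sqrt' (n - 1)
      have h2 : n - 1 < (k + 1) * (k + 1) := by
        rw [← pow_two]; exact h
      calc n ≤ n - 1 + 1 := by omega
      _ ≤ (k + 1) * (k + 1) := h2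
      _ = k * k + (k + k + 1) := by ring
    -- integer cast versions (with k*k visible for nlinarith)
    have il : (k : ℤ) * k < n := by exact_mod_cast hl
    have ih : (n : ℤ) ≤ (k : ℤ) * k + (k + k + 1) := by exact_mod_cast hh
    -- make k * k opaque for omega
    obtain ⟨m, hm⟩ : ∃ m, k * k = m := ⟨_, rfl⟩
    have im : (k : ℤ) * k = (m : ℤ) := by exact_mod_cast congrArg (Nat.cast (R := ℤ)) hm
    rw [hm] at hl hh
    by_cases hcase : n ≤ m + k
    · have ic : (n : ℤ) ≤ (k : ℤ) * k + k := by rw [im]; exact_mod_cast hcase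
      obtain ⟨V, hcard, hcount⟩ := count_main k k (n - m) (by omega) hk1 (by omega)
      rw [hm] at hcard
      refine ⟨V, by omega, ?_⟩
      rw [hcount, ceil_eq n (2 * k + 1) (by push_cast; nlinarith [il]) (by push_cast; nlinarith [ic])]
      push_cast [Nat.cast_sub (show m ≤ n by omega)]
      linarith [im]
    · have ic : (k : ℤ) * k + k < n := by rw [im]; exact_mod_cast not_le.mp hcase
      have ihh : (n : ℤ) ≤ ((k:ℤ) + 1) * ((k:ℤ) + 1) := by nlinarith [ih]
      obtain ⟨V, hcard, hcount⟩ := count_main (k + 1) k (n - m - k) (by omega) hk1 (by omega)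
      have hm2 : (k + 1) * k = m + k := by rw [← hm]; ring
      rw [hm2] at hcard
      have hsub : n - m - k = n - (m + k) := by omega
      refine ⟨V, by omega, ?_⟩
      rw [hcount, ceil_eq n (2 * k + 2) (by push_cast; nlinarith [ic]) (by push_cast; nlinarith [ihh])]
      have im2 : ((k : ℤ) + 1) * k = (m : ℤ) + k := by rw [← im]; ring
      rw [hsub]
      push_cast [Nat.cast_sub (show m + k ≤ n by omega)]
      linear_combination 2 * im2
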